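/- Let H = J₁ᵀ V⁻¹ J₁ where V is symmetric positive definite and J₁ has full column rank. Then H is symmetric positive definite, and for X = H⁻¹ - H⁻¹J₂ᵀ(J₂H⁻¹J₂ᵀ)⁻¹J₂H⁻¹ (with J₂ full row rank), the matrix V - J₁ X J₁ᵀ is positive semidefinite. -/

import Mathlib

open Matrix

private lemma conjT_eq_transpose {α β : Type*} (A : Matrix α β ℝ) : Aᴴ = Aᵀ := by
  ext i j; simp [conjTranspose_apply]

private lemma mulVec_inj_of_rank {p n : ℕ} (A : Matrix (Fin p) (Fin n) ℝ)
    (h : A.rank = n) : Function.Injective A.mulVec := by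
  have hk : LinearMap.ker A.mulVecLin = ⊥ := by
    have h1 := LinearMap.finrank_range_add_finrank_ker A.mulVecLin
    rw [Module.finrank_fintype_fun_eq_card, Fintype.card_fin] at h1
    have : Module.finrank ℝ (LinearMap.ker A.mulVecLin) = 0 := by
      have : Matrix.rank A = Module.finrank ℝ (LinearMap.range A.mulVecLin) := rfl
      omega
    exact Submodule.finrank_eq_zero.mp this
  intro x y hxy
  have := LinearMap.ker_eq_bot.mp hk
  exact this hxy

private lemma posDef_conj {p k : ℕ} {M : Matrix (Fin p) (Fin p) ℝ}
    (hM : M.PosDef) (B : Matrix (Fin p) (Fin k) ℝ)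
    (hB : Function.Injective B.mulVec) : (Bᵀ * M * B).PosDef := by
  rw [posDef_iff_dotProduct_mulVec]
  constructor
  · rw [← conjT_eq_transpose B]
    exact Matrix.isHermitian_conjTranspose_mul_mul B hM.isHermitian
  · intro x hx
    have hBx : B *ᵥ x ≠ 0 := by
      intro h
      exact hx (hB (by simpa using h))
    have := hM.dotProduct_mulVec_pos hBx
    calc (0:ℝ) < star (B *ᵥ x) ⬝ᵥ M *ᵥ (B *ᵥ x) := this
      _ = star x ⬝ᵥ (Bᵀ * M * B) *ᵥ x := by
          rw [← mulVec_mulVec, ← mulVec_mulVec]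
          simp only [star_trivial]
          rw [dotProduct_mulVec (B *ᵥ x) M, ← dotProduct_mulVec,
            ← vecMul_transpose, ← dotProduct_mulVec]

theorem stmt14 {p n m : ℕ}
    (V : Matrix (Fin p) (Fin p) ℝ) (J₁ : Matrix (Fin p) (Fin n) ℝ)
    (J₂ : Matrix (Fin m) (Fin n) ℝ)
    (hV : V.PosDef) (hJ₁ : J₁.rank = n) (hJ₂ : J₂.rank = m) :
    (J₁ᵀ * V⁻¹ * J₁).PosDef ∧
    (V - J₁ *
        ((J₁ᵀ * V⁻¹ * J₁)⁻¹ -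
          (J₁ᵀ * V⁻¹ * J₁)⁻¹ * J₂ᵀ *
            (J₂ * (J₁ᵀ * V⁻¹ * J₁)⁻¹ * J₂ᵀ)⁻¹ * J₂ * (J₁ᵀ * V⁻¹ * J₁)⁻¹) *
        J₁ᵀ).PosSemidef := by
  set H := J₁ᵀ * V⁻¹ * J₁ with hHdef
  have hJ₁inj : Function.Injective J₁.mulVec := mulVec_inj_of_rank J₁ hJ₁
  have hH : H.PosDef := posDef_conj hV.inv J₁ hJ₁inj
  refine ⟨hH, ?_⟩
  have hHinv : H⁻¹.PosDef := hH.inv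
  have hJ₂inj : Function.Injective (J₂ᵀ).mulVec :=
    mulVec_inj_of_rank J₂ᵀ (by rw [Matrix.rank_transpose]; exact hJ₂)
  have hK : (J₂ * H⁻¹ * J₂ᵀ).PosDef := by
    have := posDef_conj hHinv J₂ᵀ hJ₂inj
    rwa [transpose_transpose] at this
  have hKinv : (J₂ * H⁻¹ * J₂ᵀ)⁻¹.PosDef := hK.inv
  -- H⁻¹ is symmetric
  have hHsymm : H⁻¹ᵀ = H⁻¹ := by
    rw [← conjT_eq_transpose]; exact hHinv.isHermitian
  -- Schur complement: V - J₁ H⁻¹ J₁ᵀ is PSD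
  haveI : Invertible V := hV.isUnit.invertible
  haveI : Invertible H := hH.isUnit.invertible
  have hblock : (fromBlocks V J₁ J₁ᴴ H).PosSemidef := by
    rw [PosDef.fromBlocks₁₁ J₁ H hV]
    have : H - J₁ᴴ * V⁻¹ * J₁ = 0 := by
      rw [conjT_eq_transpose, hHdef, sub_self]
    rw [this]
    exact Matrix.PosSemidef.zero
  have hPSD1 : (V - J₁ * H⁻¹ * J₁ᵀ).PosSemidef := by
    have := (PosDef.fromBlocks₂₂ V J₁ hH).mp hblock
    rwa [conjT_eq_transpose] at this
  have hPSD2 : ((J₁ * H⁻¹ * J₂ᵀ) * (J₂ * H⁻¹ * J₂ᵀ)⁻¹ * (J₁ * H⁻¹ * J₂ᵀ)ᴴ).PosSemidef :=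
    hKinv.posSemidef.mul_mul_conjTranspose_same (J₁ * H⁻¹ * J₂ᵀ)
  have key : V - J₁ * (H⁻¹ - H⁻¹ * J₂ᵀ * (J₂ * H⁻¹ * J₂ᵀ)⁻¹ * J₂ * H⁻¹) * J₁ᵀ
      = (V - J₁ * H⁻¹ * J₁ᵀ) +
        ((J₁ * H⁻¹ * J₂ᵀ) * (J₂ * H⁻¹ * J₂ᵀ)⁻¹ * (J₁ * H⁻¹ * J₂ᵀ)ᴴ) := by
    rw [conjT_eq_transpose, transpose_mul, transpose_mul, transpose_transpose, hHsymm]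
    simp only [Matrix.mul_sub, Matrix.sub_mul, Matrix.mul_assoc]
    abel
  rw [key]
  exact hPSD1.add hPSD2
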